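/- Every DR-submodular norm is a weighted ℓ_1 norm: if ‖·‖ : ℝ_{\geq 0}^n → ℝ_{\geq 0} is a norm (restricted to the nonnegative orthant) satisfying the diminishing returns property ‖w + a·e_i‖ − ‖w‖ ≤ ‖x + a·e_i‖ − ‖x‖ for all x ≤ w coordinatewise, all indices i, and all a ≥ 0, and moreover ‖e_i‖ = 1 for all i, then ‖x‖ = Σ_i x_i for all x ∈ ℝ_{\geq 0}^n. -/

import Mathlib

theorem dr_submodular_norm_is_l1 {n : ℕ} (f : (Fin n → ℝ) → ℝ)
    (h_tri : ∀ x y : Fin n → ℝ, f (x + y) ≤ f x + f y)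
    (h_hom : ∀ (c : ℝ) (x : Fin n → ℝ), f (c • x) = |c| * f x)
    (h_dr : ∀ x w : Fin n → ℝ, (∀ i, 0 ≤ x i) → x ≤ w →
      ∀ i : Fin n, ∀ a : ℝ, 0 ≤ a →
        f (w + Pi.single i a) - f w ≤ f (x + Pi.single i a) - f x)
    (h_unit : ∀ i : Fin n, f (Pi.single i 1) = 1) :
    ∀ x : Fin n → ℝ, (∀ i, 0 ≤ x i) → f x = ∑ i, x i := by
  have hzero : f 0 = 0 := by
    have := h_hom 0 0
    simpa using this
  have hsingle : ∀ (i : Fin n) (c : ℝ), f (Pi.single i c) = |c| := by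
    intro i c
    have h1 : Pi.single i c = c • (Pi.single i 1 : Fin n → ℝ) := by
      funext j
      by_cases h : j = i <;> simp [Pi.single_apply, h]
    rw [h1, h_hom, h_unit, mul_one]
  have hneg : ∀ x : Fin n → ℝ, f (-x) = f x := by
    intro x
    have := h_hom (-1) x
    simpa using this
  have hnonneg : ∀ x : Fin n → ℝ, 0 ≤ f x := by
    intro x
    have h1 : f 0 ≤ f x + f (-x) := by
      have := h_tri x (-x)
      simpa using this
    rw [hzero, hneg] at h1
    linarith
  -- key lemma
  have key : ∀ x : Fin n → ℝ, (∀ i, 0 ≤ x i) → ∀ (i : Fin n) (a : ℝ), 0 ≤ a →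
      f (x + Pi.single i a) = f x + a := by
    intro x hx i a ha
    have hle : f (x + Pi.single i a) ≤ f x + a := by
      have := h_tri x (Pi.single i a)
      rw [hsingle, abs_of_nonneg ha] at this
      exact this
    refine le_antisymm hle ?_
    set d := f (x + Pi.single i a) - f x with hd
    -- g m := f (x + single i (m*a)) ≤ f x + m * d
    have hub : ∀ m : ℕ, f (x + Pi.single i (m * a)) ≤ f x + m * d := by
      intro m
      induction m with
      | zero => simp
      | succ m ih =>
          have hstep := h_dr x (x + Pi.single i (m * a)) hx
            (by
              intro j
              by_cases h : j = i
              · subst h; simp; positivity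
              · simp [Pi.single_apply, h])
            i a ha
          have heq : (x + Pi.single i ((m : ℝ) * a)) + Pi.single i a
              = x + Pi.single i (((m : ℕ) + 1 : ℕ) * a) := by
            rw [add_assoc, ← Pi.single_add]
            push_cast
            ring_nf
          rw [heq] at hstep
          have : f (x + Pi.single i (((m : ℕ) + 1 : ℕ) * a))
              ≤ f (x + Pi.single i (m * a)) + d := by linarith
          calc f (x + Pi.single i (((m : ℕ) + 1 : ℕ) * a))
              ≤ f (x + Pi.single i (m * a)) + d := this
            _ ≤ f x + m * d + d := by linarith
            _ = f x + ((m : ℕ) + 1 : ℕ) * d := by push_cast; ring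
    have hlb : ∀ m : ℕ, (m : ℝ) * a - f x ≤ f (x + Pi.single i (m * a)) := by
      intro m
      have h1 : f (Pi.single i ((m : ℝ) * a)) ≤ f (x + Pi.single i (m * a)) + f (-x) := by
        have := h_tri (x + Pi.single i (m * a)) (-x)
        simpa [add_comm, add_assoc, add_left_comm] using this
      rw [hsingle, hneg, abs_of_nonneg (by positivity)] at h1
      linarith
    -- so m*(a-d) ≤ 2 f x for all m
    by_contra hlt
    push_neg at hlt
    have had : d < a := by simp only [hd] at hlt ⊢; linarith
    obtain ⟨m, hm⟩ := exists_nat_gt (2 * f x / (a - d))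
    have hm2 : 2 * f x < m * (a - d) := by
      rw [div_lt_iff₀ (by linarith)] at hm
      linarith
    have := hub m
    have := hlb m
    nlinarith
  -- main induction
  have main : ∀ s : Finset (Fin n), ∀ x : Fin n → ℝ, (∀ i, 0 ≤ x i) →
      f (∑ i ∈ s, Pi.single i (x i)) = ∑ i ∈ s, x i := by
    intro s
    induction s using Finset.induction_on with
    | empty => intro x _; simpa using hzero
    | insert j s hj ih =>
        intro x hx
        rw [Finset.sum_insert hj, Finset.sum_insert hj]
        have hy : ∀ k, 0 ≤ (∑ i ∈ s, Pi.single i (x i)) k := by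
          intro k
          rw [Finset.sum_apply]
          refine Finset.sum_nonneg fun i _ => ?_
          by_cases h : k = i <;> simp [Pi.single_apply, h, hx i]
        have := key (∑ i ∈ s, Pi.single i (x i)) hy j (x j) (hx j)
        rw [show (Pi.single j (x j) : Fin n → ℝ) + ∑ i ∈ s, Pi.single i (x i)
            = ∑ i ∈ s, Pi.single i (x i) + Pi.single j (x j) from add_comm _ _,
          this, ih x hx]
        ring
  intro x hx
  have hxeq : x = ∑ i, Pi.single i (x i) := by
    funext k
    rw [Finset.sum_apply]
    simp [Pi.single_apply]
  have := main Finset.univ x hx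
  rw [← hxeq] at this
  exact this
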